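/- Let W be a symmetric n×n real matrix and B ∈ ℝ^{n×m}. Then there exists X ∈ ℝ^{n×m} with W = BXᵀ + XBᵀ if and only if the rank of the (n+m)×(n+m) block matrix [[W, B],[Bᵀ, 0]] equals the rank of the block matrix [[0, B],[Bᵀ, 0]] (the latter rank being 2·rank(B)). -/

import Mathlib

open Matrix

/-- The controllability matrix `[B, AB, A²B, …, A^{n−1}B]` (columns indexed by `Fin n × Fin m`). -/
def ctrbMatrix {n m : ℕ} (A : Matrix (Fin n) (Fin n) ℝ) (B : Matrix (Fin n) (Fin m) ℝ) :
    Matrix (Fin n) (Fin n × Fin m) ℝ :=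
  Matrix.of fun i p => ((A ^ (p.1 : ℕ)) * B) i p.2

/-- `(A,B)` is a controllable pair iff the controllability matrix has rank `n`. -/
def IsControllablePair {n m : ℕ} (A : Matrix (Fin n) (Fin n) ℝ)
    (B : Matrix (Fin n) (Fin m) ℝ) : Prop :=
  (ctrbMatrix A B).rank = n

/-- A real square matrix is Hurwitz iff all its (complex) eigenvalues have negative real part. -/
def IsHurwitz {n : ℕ} (F : Matrix (Fin n) (Fin n) ℝ) : Prop :=
  ∀ μ ∈ spectrum ℂ (F.map (algebraMap ℝ ℂ)), μ.re < 0

section Helpers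
set_option linter.unusedSectionVars false


variable {l m n : Type*} [Fintype l] [Fintype m] [Fintype n]

/-- If the columns of `A` and `B` are orthogonal, the rank of `[A B]` is the sum of ranks. -/
lemma rank_fromColumns_of_orth (A : Matrix l m ℝ) (B : Matrix l n ℝ)
    (h : Aᵀ * B = 0) : (fromCols A B).rank = A.rank + B.rank := by
  have hrange : LinearMap.range (fromCols A B).mulVecLin =
      LinearMap.range A.mulVecLin ⊔ LinearMap.range B.mulVecLin := by
    apply le_antisymm
    · rintro x ⟨v, rfl⟩
      have hv : v = Sum.elim (v ∘ Sum.inl) (v ∘ Sum.inr) := by ext (i|i) <;> rfl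
      rw [mulVecLin_apply, hv, fromCols_mulVec_sumElim]
      exact Submodule.add_mem_sup ⟨_, rfl⟩ ⟨_, rfl⟩
    · rw [sup_le_iff]
      constructor
      · rintro x ⟨u, rfl⟩
        exact ⟨Sum.elim u 0, by rw [mulVecLin_apply, fromCols_mulVec_sumElim]; simp⟩
      · rintro x ⟨u, rfl⟩
        exact ⟨Sum.elim 0 u, by rw [mulVecLin_apply, fromCols_mulVec_sumElim]; simp⟩
  have hBA : Bᵀ * A = 0 := by
    have := congrArg Matrix.transpose h
    rwa [transpose_mul, transpose_transpose, transpose_zero] at this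
  have hdisj : LinearMap.range A.mulVecLin ⊓ LinearMap.range B.mulVecLin = ⊥ := by
    rw [eq_bot_iff]
    rintro x ⟨⟨u, hu⟩, ⟨v, hv⟩⟩
    have hx : x ⬝ᵥ x = 0 := by
      calc x ⬝ᵥ x = A.mulVecLin u ⬝ᵥ B.mulVecLin v := by rw [hu, hv]
        _ = 0 := by
          rw [mulVecLin_apply, mulVecLin_apply, dotProduct_mulVec,
            ← mulVec_transpose, mulVec_mulVec, hBA, zero_mulVec, zero_dotProduct]
    simpa using dotProduct_self_eq_zero.mp hx
  have := Submodule.finrank_sup_add_finrank_inf_eq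
    (LinearMap.range A.mulVecLin) (LinearMap.range B.mulVecLin)
  rw [hdisj] at this
  simp only [finrank_bot, add_zero] at this
  rw [Matrix.rank, hrange, this, Matrix.rank, Matrix.rank]

lemma eq_zero_of_rank_eq_zero [DecidableEq n] {A : Matrix m n ℝ} (h : A.rank = 0) :
    A = 0 := by
  rw [Matrix.rank, Submodule.finrank_eq_zero, LinearMap.range_eq_bot] at h
  ext i j
  have := congrFun (congrFun (congrArg DFunLike.coe h) (Pi.single j 1)) i
  simpa [Matrix.mulVec_single_one] using this

lemma eq_zero_of_transpose_mul_self_eq_zero [DecidableEq n] {A : Matrix m n ℝ}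
    (h : Aᵀ * A = 0) : A = 0 := by
  apply eq_zero_of_rank_eq_zero
  rw [← Matrix.rank_transpose_mul_self, h, Matrix.rank_zero]

variable {p q : Type*} [Fintype p] [Fintype q]

lemma rank_fromBlocks_diag (A : Matrix l m ℝ) (D : Matrix p q ℝ) :
    (fromBlocks A 0 0 D).rank = A.rank + D.rank := by
  have h1 : (fromBlocks A (0 : Matrix l q ℝ) (0 : Matrix p m ℝ) D) =
      fromCols (fromRows A 0) (fromRows 0 D) :=
    (fromCols_fromRows_eq_fromBlocks _ _ _ _).symm
  have horth : (fromRows A (0 : Matrix p m ℝ))ᵀ * fromRows (0 : Matrix l q ℝ) D = 0 := by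
    rw [transpose_fromRows, fromCols_mul_fromRows]
    simp
  have hA : (fromRows A (0 : Matrix p m ℝ)).rank = A.rank := by
    rw [← Matrix.rank_transpose, transpose_fromRows,
      rank_fromColumns_of_orth _ _ (by simp), Matrix.rank_transpose]
    simp
  have hD : (fromRows (0 : Matrix l q ℝ) D).rank = D.rank := by
    rw [← Matrix.rank_transpose, transpose_fromRows,
      rank_fromColumns_of_orth _ _ (by simp), Matrix.rank_transpose]
    simp
  rw [h1, rank_fromColumns_of_orth _ _ horth, hA, hD]

lemma exists_right_solution [DecidableEq l] (B : Matrix l m ℝ) :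
    ∃ C : Matrix m l ℝ, Bᵀ * B * C = Bᵀ := by
  have hrange : LinearMap.range (Bᵀ * B).mulVecLin = LinearMap.range Bᵀ.mulVecLin := by
    apply Submodule.eq_of_le_of_finrank_eq
    · rw [mulVecLin_mul]
      exact LinearMap.range_comp_le_range _ _
    · show (Bᵀ * B).rank = Bᵀ.rank
      rw [Matrix.rank_transpose_mul_self, Matrix.rank_transpose]
  have hcol : ∀ j : l, ∃ c : m → ℝ, (Bᵀ * B) *ᵥ c = Bᵀ *ᵥ Pi.single j 1 := by
    intro j
    have : Bᵀ *ᵥ Pi.single j 1 ∈ LinearMap.range (Bᵀ * B).mulVecLin := by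
      rw [hrange]; exact ⟨Pi.single j 1, rfl⟩
    obtain ⟨c, hc⟩ := this
    exact ⟨c, hc⟩
  choose c hc using hcol
  refine ⟨Matrix.of fun i j => c j i, ?_⟩
  ext i j
  have := congrFun (hc j) i
  simp only [Matrix.mulVec_single_one, mulVec, dotProduct, transpose_apply] at this
  simpa [Matrix.mul_apply, mulVec, dotProduct, Pi.single_apply] using this

lemma rank_sq {M : Matrix m m ℝ} (h : Mᵀ = M) : (M * M).rank = M.rank := by
  have := Matrix.rank_self_mul_transpose M
  rwa [h] at this

lemma rank_fromBlocks_congr [DecidableEq l] [DecidableEq m]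
    (W N : Matrix l l ℝ) (B : Matrix l m ℝ) (X : Matrix l m ℝ)
    (h : W = B * Xᵀ + X * Bᵀ + N) :
    (fromBlocks W B Bᵀ (0 : Matrix m m ℝ)).rank = (fromBlocks N B Bᵀ 0).rank := by
  set L : Matrix (l ⊕ m) (l ⊕ m) ℝ := fromBlocks 1 X 0 1 with hL
  have hdet : IsUnit L.det := by
    rw [hL, det_fromBlocks_zero₂₁]; simp
  have hdetT : IsUnit Lᵀ.det := by rwa [det_transpose]
  have hfact : fromBlocks W B Bᵀ (0 : Matrix m m ℝ) = L * fromBlocks N B Bᵀ 0 * Lᵀ := by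
    rw [h, show B * Xᵀ + X * Bᵀ + N = N + X * Bᵀ + B * Xᵀ from by abel]
    simp only [hL, fromBlocks_transpose, transpose_one, transpose_zero, fromBlocks_multiply,
      Matrix.one_mul, Matrix.mul_one, Matrix.zero_mul, Matrix.mul_zero, add_zero, zero_add]
  rw [hfact, rank_mul_eq_left_of_isUnit_det _ _ hdetT, rank_mul_eq_right_of_isUnit_det _ _ hdet]


end Helpers

/-- a symmetric `W` can be written `W = BXᵀ + XBᵀ` iff
`rank [[W, B], [Bᵀ, 0]] = rank [[0, B], [Bᵀ, 0]]`, the latter rank being `2 rank B`. -/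
theorem stmt12 {n m : ℕ} (W : Matrix (Fin n) (Fin n) ℝ) (hW : W.IsSymm)
    (B : Matrix (Fin n) (Fin m) ℝ) :
    ((∃ X : Matrix (Fin n) (Fin m) ℝ, W = B * Xᵀ + X * Bᵀ) ↔
      (Matrix.fromBlocks W B Bᵀ (0 : Matrix (Fin m) (Fin m) ℝ)).rank =
        (Matrix.fromBlocks (0 : Matrix (Fin n) (Fin n) ℝ) B Bᵀ
          (0 : Matrix (Fin m) (Fin m) ℝ)).rank) ∧
    (Matrix.fromBlocks (0 : Matrix (Fin n) (Fin n) ℝ) B Bᵀ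
        (0 : Matrix (Fin m) (Fin m) ℝ)).rank = 2 * B.rank := by
  classical
  have hWt : Wᵀ = W := hW
  have hM₀t : (fromBlocks (0 : Matrix (Fin n) (Fin n) ℝ) B Bᵀ (0 : Matrix (Fin m) (Fin m) ℝ))ᵀ
      = fromBlocks 0 B Bᵀ 0 := by
    simp [fromBlocks_transpose]
  have part2 : (fromBlocks (0 : Matrix (Fin n) (Fin n) ℝ) B Bᵀ
      (0 : Matrix (Fin m) (Fin m) ℝ)).rank = 2 * B.rank := by
    rw [← rank_sq hM₀t, fromBlocks_multiply]
    simp only [Matrix.zero_mul, Matrix.mul_zero, add_zero, zero_add]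
    rw [rank_fromBlocks_diag, Matrix.rank_self_mul_transpose, Matrix.rank_transpose_mul_self,
      two_mul]
  refine ⟨⟨?_, ?_⟩, part2⟩
  · rintro ⟨X, hX⟩
    exact rank_fromBlocks_congr W 0 B X (by rw [add_zero]; exact hX)
  · intro hr
    obtain ⟨C, hC⟩ := exists_right_solution B
    set P : Matrix (Fin n) (Fin n) ℝ := B * C with hP
    have hCtB : Cᵀ * (Bᵀ * B) = B := by
      simpa [transpose_mul, Matrix.mul_assoc] using congrArg Matrix.transpose hC
    have hPt : Pᵀ = P := by
      have h1 : P = Cᵀ * (Bᵀ * B) * C := by rw [hCtB, ← hP]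
      rw [h1]
      simp [transpose_mul, Matrix.mul_assoc]
    have hPB : P * B = B := by
      have hY : Bᵀ * B * (C * B - 1) = 0 := by
        rw [Matrix.mul_sub, Matrix.mul_one, ← Matrix.mul_assoc, hC, sub_self]
      have hZ : B * (C * B - 1) = 0 := by
        apply eq_zero_of_transpose_mul_self_eq_zero
        rw [transpose_mul, Matrix.mul_assoc, ← Matrix.mul_assoc Bᵀ B _, hY, Matrix.mul_zero]
      have hsub : P * B - B = 0 := by
        calc P * B - B = B * (C * B - 1) := by
              rw [hP, Matrix.mul_sub, Matrix.mul_one, Matrix.mul_assoc]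
          _ = 0 := hZ
      exact sub_eq_zero.mp hsub
    have hCB : Cᵀ * Bᵀ = P := by rw [← transpose_mul, ← hP, hPt]
    set X : Matrix (Fin n) (Fin m) ℝ := W * Cᵀ - (2⁻¹ : ℝ) • (P * (W * Cᵀ)) with hX
    have hXt : Xᵀ = C * W - (2⁻¹ : ℝ) • (C * W * P) := by
      rw [hX]
      simp [transpose_sub, transpose_smul, transpose_mul, hWt, hPt, Matrix.mul_assoc]
    have hBXt : B * Xᵀ = P * W - (2⁻¹ : ℝ) • (P * W * P) := by
      rw [hXt, Matrix.mul_sub, Matrix.mul_smul]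
      simp only [← Matrix.mul_assoc]
      rw [← hP]
    have hXBt : X * Bᵀ = W * P - (2⁻¹ : ℝ) • (P * W * P) := by
      rw [hX, Matrix.sub_mul, Matrix.smul_mul]
      simp only [Matrix.mul_assoc]
      rw [hCB]
    set N : Matrix (Fin n) (Fin n) ℝ := W - (B * Xᵀ + X * Bᵀ) with hNdef
    have hNform : N = W - P * W - W * P + P * W * P := by
      rw [hNdef, hBXt, hXBt]
      module
    have hNt : Nᵀ = N := by
      rw [hNform]
      simp only [transpose_add, transpose_sub, transpose_mul, hWt, hPt, Matrix.mul_assoc]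
      abel
    have hNB : N * B = 0 := by
      rw [hNform]
      simp only [Matrix.sub_mul, Matrix.add_mul, Matrix.mul_assoc, hPB]
      abel
    have hBN : Bᵀ * N = 0 := by
      have := congrArg Matrix.transpose hNB
      rwa [transpose_mul, hNt, transpose_zero] at this
    have hWN : W = B * Xᵀ + X * Bᵀ + N := by rw [hNdef]; abel
    have h1 : (fromBlocks W B Bᵀ (0 : Matrix (Fin m) (Fin m) ℝ)).rank
        = (fromBlocks N B Bᵀ 0).rank := rank_fromBlocks_congr W N B X hWN
    have hM₁t : (fromBlocks N B Bᵀ (0 : Matrix (Fin m) (Fin m) ℝ))ᵀ = fromBlocks N B Bᵀ 0 := by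
      simp [fromBlocks_transpose, hNt]
    have hsq : fromBlocks N B Bᵀ (0 : Matrix (Fin m) (Fin m) ℝ) * fromBlocks N B Bᵀ 0
        = fromBlocks (N * N + B * Bᵀ) 0 0 (Bᵀ * B) := by
      rw [fromBlocks_multiply]
      simp [hNB, hBN]
    have hNNB : N * N + B * Bᵀ = (fromCols N B) * (fromCols N B)ᵀ := by
      rw [transpose_fromCols, fromCols_mul_fromRows, hNt]
    have h2 : (fromBlocks N B Bᵀ (0 : Matrix (Fin m) (Fin m) ℝ)).rank
        = N.rank + B.rank + B.rank := by
      rw [← rank_sq hM₁t, hsq, rank_fromBlocks_diag, Matrix.rank_transpose_mul_self, hNNB,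
        Matrix.rank_self_mul_transpose, rank_fromColumns_of_orth N B (by rw [hNt]; exact hNB)]
    have hrank : N.rank + B.rank + B.rank = 2 * B.rank := by
      rw [← h2, ← h1, hr, part2]
    have hN0 : N.rank = 0 := by omega
    have hNzero : N = 0 := eq_zero_of_rank_eq_zero hN0
    exact ⟨X, by rw [hWN, hNzero, add_zero]⟩
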